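/- arXiv:1312.6366 — 2 statements merged into one kernel-verified Lean document; each statement's English description precedes it below -/
import Mathlib

section
/- Neveu's exchange formula (mass-transport principle): Let μ and μ' be invariant random measures on ℝ^d with positive and finite intensities γ_μ and γ_{μ'}, and let h : Ω × ℝ^d → [0,∞) be measurable. Then γ_μ ∫∫ h(θ_x ω, −x) μ'(ω, dx) ℙ^0_μ(dω) = γ_{μ'} ∫∫ h(ω, x) μ(ω, dx) ℙ^0_{μ'}(dω). -/
open MeasureTheory Set Filter
open scoped ENNReal Pointwise Topology

noncomputable section

/-- `d`-dimensional Euclidean space. -/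
abbrev Euc (d : ℕ) : Type := EuclideanSpace ℝ (Fin d)

/-- The unit cube `[0,1]^d`. -/
def unitCube (d : ℕ) : Set (Euc d) := {x | ∀ i, x i ∈ Set.Icc (0 : ℝ) 1}

section NeveuAuxSection
open ProbabilityTheory
open scoped NNReal

namespace NeveuAux

variable {α : Type*} [MeasurableSpace α] {β : Type*} [MeasurableSpace β]

lemma isSFiniteKernel_of_forall_finite (κ : Kernel α β)
    (hfin : ∀ a, κ a Set.univ ≠ ∞) : IsSFiniteKernel κ := by
  classical
  set v : α → ℝ≥0 := fun a => (κ a Set.univ).toNNReal with hv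
  have hvm : Measurable v := (κ.measurable_coe MeasurableSet.univ).ennreal_toNNReal
  set t : ℕ → Set α := fun n => {a | v a < (n : ℝ≥0) + 1} with ht
  have htm : ∀ n, MeasurableSet (t n) := fun n => measurableSet_lt hvm measurable_const
  set s := disjointed t with hs
  have hsm : ∀ n, MeasurableSet (s n) := MeasurableSet.disjointed htm
  have hsfor : ∀ a, ∃ n, a ∈ s n := by
    intro a
    have : a ∈ ⋃ n, s n := by
      rw [hs, iUnion_disjointed]
      obtain ⟨n, hn⟩ := exists_nat_gt (v a)
      exact Set.mem_iUnion.2 ⟨n, lt_trans hn (by exact_mod_cast lt_add_one (n : ℝ≥0))⟩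
    exact Set.mem_iUnion.1 this
  refine ⟨⟨fun n => Kernel.piecewise (hsm n) κ 0, fun n => ?_, ?_⟩⟩
  · refine ⟨⟨(((n : ℝ≥0) + 1 : ℝ≥0) : ℝ≥0∞), ENNReal.coe_lt_top, fun a => ?_⟩⟩
    rw [Kernel.piecewise_apply]
    split_ifs with ha
    · have h1 : v a < (n : ℝ≥0) + 1 := disjointed_subset t n ha
      have h2 : κ a Set.univ = (v a : ℝ≥0∞) := (ENNReal.coe_toNNReal (hfin a)).symm
      rw [h2]
      exact ENNReal.coe_le_coe.2 h1.le
    · simp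
  · ext a A hA
    rw [Kernel.sum_apply' _ _ hA]
    obtain ⟨n₀, hn₀⟩ := hsfor a
    rw [tsum_eq_single n₀]
    · rw [Kernel.piecewise_apply, if_pos hn₀]
    · intro m hm
      have hnot : a ∉ s m := fun hmem => (disjoint_disjointed t hm).le_bot ⟨hmem, hn₀⟩
      simp [Kernel.piecewise_apply, if_neg hnot]

lemma isSFiniteKernel_of_locfin {d : ℕ} (κ : Kernel α (Euc d))
    (hfin : ∀ a, IsFiniteMeasureOnCompacts (κ a)) : IsSFiniteKernel κ := by
  set S : ℕ → Set (Euc d) := fun n => Metric.closedBall (0 : Euc d) n with hS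
  have hSm : ∀ n, MeasurableSet (S n) := fun n => measurableSet_closedBall
  set D := disjointed S with hD
  have hDm : ∀ n, MeasurableSet (D n) := MeasurableSet.disjointed hSm
  have hkey : κ = Kernel.sum fun n => κ.restrict (hDm n) := by
    ext a A hA
    have huniv : ⋃ n, S n = Set.univ := by
      refine Set.eq_univ_of_forall fun x => ?_
      obtain ⟨n, hn⟩ := exists_nat_ge ‖x‖
      exact Set.mem_iUnion.2 ⟨n, by simpa [hS, Metric.mem_closedBall, dist_zero_right] using hn⟩
    have hU : ⋃ n, A ∩ D n = A := by
      rw [← Set.inter_iUnion, hD, iUnion_disjointed, huniv, Set.inter_univ]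
    rw [Kernel.sum_apply' _ _ hA]
    simp_rw [Kernel.restrict_apply' _ _ _ hA]
    have hsum : κ a (⋃ n, A ∩ D n) = ∑' n, κ a (A ∩ D n) :=
      measure_iUnion (fun m n hmn =>
        ((disjoint_disjointed S hmn).mono inter_subset_right inter_subset_right))
        (fun n => hA.inter (hDm n))
    rw [← hsum, hU]
  rw [hkey]
  refine Kernel.isSFiniteKernel_sum_of_denumerable fun n => ?_
  refine isSFiniteKernel_of_forall_finite _ fun a => ?_
  rw [Kernel.restrict_apply' _ _ _ MeasurableSet.univ, Set.univ_inter]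
  have := hfin a
  exact ((measure_mono (disjointed_subset S n)).trans_lt
    (IsCompact.measure_lt_top (isCompact_closedBall _ _))).ne

lemma meas_double {E : Type*} [MeasurableSpace E] (κ₁ κ₂ : Kernel α E)
    [IsSFiniteKernel κ₁] [IsSFiniteKernel κ₂] {f : α → E → E → ℝ≥0∞}
    (hf : Measurable fun p : α × E × E => f p.1 p.2.1 p.2.2) :
    Measurable fun a => ∫⁻ x, ∫⁻ z, f a x z ∂κ₂ a ∂κ₁ a := by
  set η : Kernel (α × E) E := κ₂.comap (Prod.fst : α × E → α) measurable_fst with hη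
  haveI : IsSFiniteKernel η := by rw [hη]; infer_instance
  have hin : Measurable fun p : α × E => ∫⁻ z, f p.1 p.2 z ∂η p :=
    Measurable.lintegral_kernel_prod_right' (κ := η)
      (f := fun q : (α × E) × E => f q.1.1 q.1.2 q.2)
      (hf.comp (measurable_fst.fst.prodMk (measurable_fst.snd.prodMk measurable_snd)))
  have hin' : Measurable fun p : α × E => ∫⁻ z, f p.1 p.2 z ∂κ₂ p.1 := by
    simpa [hη, Kernel.comap_apply] using hin
  exact Measurable.lintegral_kernel_prod_right' (κ := κ₁) hin'

lemma measurableSet_unitCube (d : ℕ) : MeasurableSet (unitCube d) := by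
  have : unitCube d = ⋂ i, (fun x : Euc d => x i) ⁻¹' Set.Icc (0:ℝ) 1 := by
    ext x; simp [unitCube]
  rw [this]
  exact MeasurableSet.iInter fun i =>
    (show Continuous fun x : Euc d => x i by fun_prop).measurable measurableSet_Icc

lemma volume_unitCube (d : ℕ) : (volume : Measure (Euc d)) (unitCube d) = 1 := by
  have h := (EuclideanSpace.volume_preserving_symm_measurableEquiv_toLp (Fin d)).measure_preimage
    (s := Set.univ.pi fun _ : Fin d => Set.Icc (0:ℝ) 1)
    ((MeasurableSet.univ_pi fun _ => measurableSet_Icc).nullMeasurableSet)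
  have hset : (MeasurableEquiv.toLp 2 (Fin d → ℝ)).symm ⁻¹' (Set.univ.pi fun _ => Set.Icc (0:ℝ) 1)
      = unitCube d := by
    ext x
    simp [unitCube, Set.mem_pi, Pi.le_def, forall_and]
  rw [hset] at h
  rw [h, volume_pi_pi]
  simp

lemma volume_shift_cube {d : ℕ} (x : Euc d) :
    ∫⁻ u, (unitCube d).indicator (fun _ => (1:ℝ≥0∞)) (x + u) ∂(volume : Measure (Euc d)) = 1 := by
  have hCm := measurableSet_unitCube d
  have hfun : (fun u => (unitCube d).indicator (fun _ => (1:ℝ≥0∞)) (x + u))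
      = ((fun u => x + u) ⁻¹' unitCube d).indicator (fun _ => 1) := by
    ext u
    by_cases hu : x + u ∈ unitCube d <;> simp [hu, Set.indicator, Set.mem_preimage]
  rw [hfun, lintegral_indicator (hCm.preimage (measurable_const_add x)), setLIntegral_one,
    measure_preimage_add, volume_unitCube]

lemma volume_shift_cube' {d : ℕ} (z : Euc d) :
    ∫⁻ u, (unitCube d).indicator (fun _ => (1:ℝ≥0∞)) (z - u) ∂(volume : Measure (Euc d)) = 1 := by
  have hCm := measurableSet_unitCube d
  have hfun : (fun u => (unitCube d).indicator (fun _ => (1:ℝ≥0∞)) (z - u))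
      = ((fun u => z - u) ⁻¹' unitCube d).indicator (fun _ => 1) := by
    ext u
    by_cases hu : z - u ∈ unitCube d <;> simp [hu, Set.indicator, Set.mem_preimage]
  have hmeas : Measurable fun u : Euc d => z - u := measurable_const.sub measurable_id
  rw [hfun, lintegral_indicator (hCm.preimage hmeas), setLIntegral_one]
  have hpre : (fun u : Euc d => z - u) ⁻¹' unitCube d
      = (fun u : Euc d => -u) ⁻¹' ((fun v => z + v) ⁻¹' unitCube d) := by
    ext u; simp [Set.mem_preimage, sub_eq_add_neg]
  rw [hpre]
  have hneg := Measure.measure_preimage_neg (volume : Measure (Euc d))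
    ((fun v => z + v) ⁻¹' unitCube d)
  rw [show (fun u : Euc d => -u) = (Neg.neg : Euc d → Euc d) from rfl, hneg,
    measure_preimage_add, volume_unitCube]

lemma indicator_one_mul {E : Type*} (s : Set E) (w : E → ℝ≥0∞) (z : E) :
    s.indicator (fun _ => (1:ℝ≥0∞)) z * w z = s.indicator w z := by
  by_cases hz : z ∈ s <;> simp [hz]


lemma cube_unfold {d : ℕ} (ν ν' : Measure (Euc d)) [SigmaFinite ν] [SigmaFinite ν']
    (Φ : Euc d → Euc d → ℝ≥0∞) (hΦ : Measurable fun p : Euc d × Euc d => Φ p.1 p.2) :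
    ∫⁻ u, ∫⁻ x, ∫⁻ z, (unitCube d).indicator (fun _ => 1) z *
        (unitCube d).indicator (fun _ => 1) (x + u) * Φ x z ∂ν ∂ν' ∂(volume : Measure (Euc d))
      = ∫⁻ z in unitCube d, ∫⁻ x, Φ x z ∂ν' ∂ν := by
  have hCm := measurableSet_unitCube d
  have hind : Measurable ((unitCube d).indicator (fun _ => (1:ℝ≥0∞))) :=
    measurable_const.indicator hCm
  have hinner : Measurable fun p : Euc d × Euc d => ∫⁻ z,
      (unitCube d).indicator (fun _ => (1:ℝ≥0∞)) z *
        (unitCube d).indicator (fun _ => 1) (p.2 + p.1) * Φ p.2 z ∂ν :=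
    Measurable.lintegral_prod_right' (ν := ν)
      (f := fun q : (Euc d × Euc d) × Euc d =>
        (unitCube d).indicator (fun _ => (1:ℝ≥0∞)) q.2 *
          (unitCube d).indicator (fun _ => 1) (q.1.2 + q.1.1) * Φ q.1.2 q.2)
      (((hind.comp measurable_snd).mul
        (hind.comp (measurable_fst.snd.add measurable_fst.fst))).mul
        (hΦ.comp (measurable_fst.snd.prodMk measurable_snd)))
  rw [lintegral_lintegral_swap (μ := (volume : Measure (Euc d))) (ν := ν')
    (f := fun u x => ∫⁻ z, (unitCube d).indicator (fun _ => (1:ℝ≥0∞)) z *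
      (unitCube d).indicator (fun _ => 1) (x + u) * Φ x z ∂ν) hinner.aemeasurable]
  have hx : ∀ x, ∫⁻ u, ∫⁻ z, (unitCube d).indicator (fun _ => (1:ℝ≥0∞)) z *
      (unitCube d).indicator (fun _ => 1) (x + u) * Φ x z ∂ν ∂(volume : Measure (Euc d))
      = ∫⁻ z in unitCube d, Φ x z ∂ν := by
    intro x
    have hmeas2 : Measurable fun p : Euc d × Euc d =>
        (unitCube d).indicator (fun _ => (1:ℝ≥0∞)) p.2 *
          (unitCube d).indicator (fun _ => 1) (x + p.1) * Φ x p.2 :=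
      ((hind.comp measurable_snd).mul
        (hind.comp (measurable_const.add measurable_fst))).mul
        (hΦ.comp (measurable_const.prodMk measurable_snd))
    rw [lintegral_lintegral_swap (μ := (volume : Measure (Euc d))) (ν := ν)
      (f := fun u z => (unitCube d).indicator (fun _ => (1:ℝ≥0∞)) z *
        (unitCube d).indicator (fun _ => 1) (x + u) * Φ x z) hmeas2.aemeasurable]
    have hz : ∀ z, ∫⁻ u, (unitCube d).indicator (fun _ => (1:ℝ≥0∞)) z *
        (unitCube d).indicator (fun _ => 1) (x + u) * Φ x z ∂(volume : Measure (Euc d))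
        = (unitCube d).indicator (Φ x) z := by
      intro z
      have hcomm : ∀ u : Euc d, (unitCube d).indicator (fun _ => (1:ℝ≥0∞)) z *
          (unitCube d).indicator (fun _ => 1) (x + u) * Φ x z
          = ((unitCube d).indicator (fun _ => 1) z * Φ x z) *
              (unitCube d).indicator (fun _ => 1) (x + u) := fun u => mul_right_comm _ _ _
      have hmu : Measurable fun u : Euc d =>
          (unitCube d).indicator (fun _ => (1:ℝ≥0∞)) (x + u) :=
        hind.comp (measurable_const.add measurable_id)
      simp_rw [hcomm]
      rw [lintegral_const_mul _ hmu, volume_shift_cube x, mul_one,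
        indicator_one_mul (unitCube d) (Φ x) z]
    rw [lintegral_congr hz, lintegral_indicator hCm]
  rw [lintegral_congr hx]
  exact lintegral_lintegral_swap (μ := ν') (ν := ν.restrict (unitCube d))
    (f := fun x z => Φ x z) hΦ.aemeasurable

lemma cube_unfold' {d : ℕ} (ν ν' : Measure (Euc d)) [SigmaFinite ν] [SigmaFinite ν']
    (Φ : Euc d → Euc d → ℝ≥0∞) (hΦ : Measurable fun p : Euc d × Euc d => Φ p.1 p.2) :
    ∫⁻ u, ∫⁻ x, ∫⁻ z, (unitCube d).indicator (fun _ => 1) (z - u) *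
        (unitCube d).indicator (fun _ => 1) x * Φ x z ∂ν ∂ν' ∂(volume : Measure (Euc d))
      = ∫⁻ x in unitCube d, ∫⁻ z, Φ x z ∂ν ∂ν' := by
  have hCm := measurableSet_unitCube d
  have hind : Measurable ((unitCube d).indicator (fun _ => (1:ℝ≥0∞))) :=
    measurable_const.indicator hCm
  have hinner : Measurable fun p : Euc d × Euc d => ∫⁻ z,
      (unitCube d).indicator (fun _ => (1:ℝ≥0∞)) (z - p.1) *
        (unitCube d).indicator (fun _ => 1) p.2 * Φ p.2 z ∂ν :=
    Measurable.lintegral_prod_right' (ν := ν)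
      (f := fun q : (Euc d × Euc d) × Euc d =>
        (unitCube d).indicator (fun _ => (1:ℝ≥0∞)) (q.2 - q.1.1) *
          (unitCube d).indicator (fun _ => 1) q.1.2 * Φ q.1.2 q.2)
      (((hind.comp (measurable_snd.sub measurable_fst.fst)).mul
        (hind.comp measurable_fst.snd)).mul
        (hΦ.comp (measurable_fst.snd.prodMk measurable_snd)))
  rw [lintegral_lintegral_swap (μ := (volume : Measure (Euc d))) (ν := ν')
    (f := fun u x => ∫⁻ z, (unitCube d).indicator (fun _ => (1:ℝ≥0∞)) (z - u) *
      (unitCube d).indicator (fun _ => 1) x * Φ x z ∂ν) hinner.aemeasurable]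
  have hx : ∀ x, ∫⁻ u, ∫⁻ z, (unitCube d).indicator (fun _ => (1:ℝ≥0∞)) (z - u) *
      (unitCube d).indicator (fun _ => 1) x * Φ x z ∂ν ∂(volume : Measure (Euc d))
      = (unitCube d).indicator (fun _ => 1) x * ∫⁻ z, Φ x z ∂ν := by
    intro x
    have hmeas2 : Measurable fun p : Euc d × Euc d =>
        (unitCube d).indicator (fun _ => (1:ℝ≥0∞)) (p.2 - p.1) *
          (unitCube d).indicator (fun _ => 1) x * Φ x p.2 :=
      ((hind.comp (measurable_snd.sub measurable_fst)).mul measurable_const).mul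
        (hΦ.comp (measurable_const.prodMk measurable_snd))
    rw [lintegral_lintegral_swap (μ := (volume : Measure (Euc d))) (ν := ν)
      (f := fun u z => (unitCube d).indicator (fun _ => (1:ℝ≥0∞)) (z - u) *
        (unitCube d).indicator (fun _ => 1) x * Φ x z) hmeas2.aemeasurable]
    have hz : ∀ z, ∫⁻ u, (unitCube d).indicator (fun _ => (1:ℝ≥0∞)) (z - u) *
        (unitCube d).indicator (fun _ => 1) x * Φ x z ∂(volume : Measure (Euc d))
        = (unitCube d).indicator (fun _ => 1) x * Φ x z := by
      intro z
      have hcomm : ∀ u : Euc d, (unitCube d).indicator (fun _ => (1:ℝ≥0∞)) (z - u) *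
          (unitCube d).indicator (fun _ => 1) x * Φ x z
          = ((unitCube d).indicator (fun _ => 1) x * Φ x z) *
              (unitCube d).indicator (fun _ => 1) (z - u) := fun u => mul_rotate _ _ _
      have hmu : Measurable fun u : Euc d =>
          (unitCube d).indicator (fun _ => (1:ℝ≥0∞)) (z - u) :=
        hind.comp (measurable_const.sub measurable_id)
      simp_rw [hcomm]
      rw [lintegral_const_mul _ hmu, volume_shift_cube' z, mul_one]
    have hmz : Measurable fun z : Euc d => Φ x z :=
      hΦ.comp (measurable_const.prodMk measurable_id)
    rw [lintegral_congr hz, lintegral_const_mul _ hmz]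
  rw [lintegral_congr hx]
  have hfin : ∀ x, (unitCube d).indicator (fun _ => (1:ℝ≥0∞)) x * ∫⁻ z, Φ x z ∂ν
      = (unitCube d).indicator (fun x => ∫⁻ z, Φ x z ∂ν) x := fun x =>
    indicator_one_mul (unitCube d) (fun x => ∫⁻ z, Φ x z ∂ν) x
  rw [lintegral_congr hfin, lintegral_indicator hCm]

lemma palm_lintegral {d : ℕ} {Ω : Type} [MeasurableSpace Ω]
    (P : Measure Ω) [IsProbabilityMeasure P]
    (θ : Euc d → Ω → Ω) (hθ_meas : Measurable fun q : Ω × Euc d => θ q.2 q.1)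
    (μ : Ω → Measure (Euc d)) (hμ_meas : Measurable μ)
    (hμ_locfin : ∀ ω, IsFiniteMeasureOnCompacts (μ ω))
    (γ : ℝ≥0∞) (Palm : Measure Ω)
    (hPalm : ∀ A : Set Ω, MeasurableSet A →
      Palm A = γ⁻¹ * ∫⁻ ω, ∫⁻ x in unitCube d, A.indicator (fun _ => 1) (θ x ω) ∂(μ ω) ∂P)
    (f : Ω → ℝ≥0∞) (hf : Measurable f) :
    ∫⁻ ω, f ω ∂Palm = γ⁻¹ * ∫⁻ ω, ∫⁻ x in unitCube d, f (θ x ω) ∂(μ ω) ∂P := by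
  have hCm : MeasurableSet (unitCube d) := measurableSet_unitCube d
  set κ : Kernel Ω (Euc d) := ⟨μ, hμ_meas⟩ with hκ
  have hκa : ∀ ω, κ ω = μ ω := fun ω => rfl
  haveI : IsSFiniteKernel κ := isSFiniteKernel_of_locfin κ (fun a => hμ_locfin a)
  set κC : Kernel Ω (Euc d) := κ.restrict hCm with hκC
  have hκCa : ∀ ω, κC ω = (μ ω).restrict (unitCube d) := fun ω => by
    rw [hκC, Kernel.restrict_apply, hκa]
  set T : Ω × Euc d → Ω := fun p => θ p.2 p.1 with hT
  have hTm : Measurable T := hθ_meas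
  have hθω : ∀ ω : Ω, Measurable fun x : Euc d => θ x ω := fun ω =>
    hθ_meas.comp (measurable_const.prodMk measurable_id)
  set ρ : Measure Ω := (P.compProd κC).map T with hρ
  have hPalmEq : Palm = γ⁻¹ • ρ := by
    ext A hA
    rw [hPalm A hA, Measure.smul_apply, smul_eq_mul, hρ, Measure.map_apply hTm hA,
      Measure.compProd_apply (hTm hA)]
    congr 1
    refine lintegral_congr fun ω => ?_
    have hpre : Prod.mk ω ⁻¹' (T ⁻¹' A) = (fun x => θ x ω) ⁻¹' A := rfl
    have hind : ∀ x, A.indicator (fun _ => (1:ℝ≥0∞)) (θ x ω)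
        = ((fun x => θ x ω) ⁻¹' A).indicator (fun _ => 1) x := fun x => by
      by_cases hx : θ x ω ∈ A <;> simp [hx]
    rw [hκCa, hpre]
    simp_rw [hind]
    rw [lintegral_indicator (hA.preimage (hθω ω))]
    simp
  rw [hPalmEq, lintegral_smul_measure, hρ, lintegral_map hf hTm,
    Measure.lintegral_compProd (f := fun p : Ω × Euc d => f (T p)) (hf.comp hTm)]
  congr 1

end NeveuAux
end NeveuAuxSection

/-- **Neveu's exchange formula** (mass-transport principle). For invariant random
measures `μ, μ'` on `ℝ^d` with positive finite intensities and every measurable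
`h : Ω × ℝ^d → [0,∞]`,
`γ_μ 𝔼^0_μ ∫ h(θ_x ω, -x) μ'(dx) = γ_{μ'} 𝔼^0_{μ'} ∫ h(ω, x) μ(dx)`. -/
theorem neveu_exchange_formula
    {d : ℕ} {Ω : Type} [MeasurableSpace Ω]
    (P : Measure Ω) [IsProbabilityMeasure P]
    (θ : Euc d → Ω → Ω)
    (hθ_meas : Measurable fun q : Ω × Euc d => θ q.2 q.1)
    (hθ_add : ∀ x y : Euc d, θ (x + y) = θ x ∘ θ y)
    (hθ_zero : θ 0 = id)
    (hθ_inv : ∀ x, P.map (θ x) = P)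
    (μ μ' : Ω → Measure (Euc d))
    (hμ_meas : Measurable μ) (hμ'_meas : Measurable μ')
    (hμ_locfin : ∀ ω, IsFiniteMeasureOnCompacts (μ ω))
    (hμ'_locfin : ∀ ω, IsFiniteMeasureOnCompacts (μ' ω))
    (hμ_inv : ∀ x ω, μ (θ x ω) = (μ ω).map fun y => y - x)
    (hμ'_inv : ∀ x ω, μ' (θ x ω) = (μ' ω).map fun y => y - x)
    (γ γ' : ℝ≥0∞)
    (hγ : γ = ∫⁻ ω, μ ω (unitCube d) ∂P) (hγ' : γ' = ∫⁻ ω, μ' ω (unitCube d) ∂P)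
    (hγ_pos : 0 < γ) (hγ_fin : γ ≠ ∞) (hγ'_pos : 0 < γ') (hγ'_fin : γ' ≠ ∞)
    (Palm Palm' : Measure Ω)
    (hPalm : ∀ A : Set Ω, MeasurableSet A →
      Palm A = γ⁻¹ * ∫⁻ ω, ∫⁻ x in unitCube d, A.indicator (fun _ => 1) (θ x ω) ∂(μ ω) ∂P)
    (hPalm' : ∀ A : Set Ω, MeasurableSet A →
      Palm' A = γ'⁻¹ * ∫⁻ ω, ∫⁻ x in unitCube d, A.indicator (fun _ => 1) (θ x ω) ∂(μ' ω) ∂P)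
    (h : Ω → Euc d → ℝ≥0∞) (hh : Measurable (Function.uncurry h)) :
    γ * ∫⁻ ω, ∫⁻ x, h (θ x ω) (-x) ∂(μ' ω) ∂Palm
      = γ' * ∫⁻ ω, ∫⁻ x, h ω x ∂(μ ω) ∂Palm' := by
  classical
  have hCm : MeasurableSet (unitCube d) := NeveuAux.measurableSet_unitCube d
  have hind : Measurable ((unitCube d).indicator fun _ => (1:ℝ≥0∞)) :=
    measurable_const.indicator hCm
  set κ : ProbabilityTheory.Kernel Ω (Euc d) := ⟨μ, hμ_meas⟩ with hκdef
  set κ' : ProbabilityTheory.Kernel Ω (Euc d) := ⟨μ', hμ'_meas⟩ with hκ'def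
  haveI : ProbabilityTheory.IsSFiniteKernel κ :=
    NeveuAux.isSFiniteKernel_of_locfin κ (fun a => hμ_locfin a)
  haveI : ProbabilityTheory.IsSFiniteKernel κ' :=
    NeveuAux.isSFiniteKernel_of_locfin κ' (fun a => hμ'_locfin a)
  have hσ : ∀ ω, SigmaFinite (μ ω) := fun ω => by
    haveI := hμ_locfin ω; infer_instance
  have hσ' : ∀ ω, SigmaFinite (μ' ω) := fun ω => by
    haveI := hμ'_locfin ω; infer_instance
  have hθu : ∀ u : Euc d, Measurable (θ u) := fun u =>
    hθ_meas.comp (measurable_id.prodMk measurable_const)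
  have hθθ : ∀ (a b : Euc d) (ω : Ω), θ a (θ b ω) = θ (a + b) ω := fun a b ω =>
    (congrFun (hθ_add a b) ω).symm
  -- measurability of the two Palm integrands
  have hF : Measurable fun ω => ∫⁻ x, h (θ x ω) (-x) ∂μ' ω :=
    Measurable.lintegral_kernel_prod_right' (κ := κ')
      (f := fun p : Ω × Euc d => h (θ p.2 p.1) (-p.2))
      (hh.comp (hθ_meas.prodMk measurable_snd.neg))
  have hG : Measurable fun ω => ∫⁻ x, h ω x ∂μ ω :=
    Measurable.lintegral_kernel_prod_right' (κ := κ)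
      (f := fun p : Ω × Euc d => h p.1 p.2) hh
  -- Palm formulas
  have L1 : ∫⁻ ω, ∫⁻ x, h (θ x ω) (-x) ∂μ' ω ∂Palm
      = γ⁻¹ * ∫⁻ ω, ∫⁻ z in unitCube d, ∫⁻ x, h (θ x (θ z ω)) (-x) ∂μ' (θ z ω) ∂μ ω ∂P :=
    NeveuAux.palm_lintegral P θ hθ_meas μ hμ_meas hμ_locfin γ Palm hPalm
      (f := fun ω => ∫⁻ x, h (θ x ω) (-x) ∂μ' ω) hF
  have L9 : ∫⁻ ω, ∫⁻ x, h ω x ∂μ ω ∂Palm'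
      = γ'⁻¹ * ∫⁻ ω, ∫⁻ x in unitCube d, ∫⁻ z, h (θ x ω) z ∂μ (θ x ω) ∂μ' ω ∂P :=
    NeveuAux.palm_lintegral P θ hθ_meas μ' hμ'_meas hμ'_locfin γ' Palm' hPalm'
      (f := fun ω => ∫⁻ z, h ω z ∂μ ω) hG
  -- pointwise rewriting of the inner integrals
  have e12 : ∀ (ω : Ω) (z : Euc d),
      ∫⁻ x, h (θ x (θ z ω)) (-x) ∂μ' (θ z ω) = ∫⁻ x, h (θ x ω) (z - x) ∂μ' ω := by
    intro ω z
    have hsub : Measurable fun y : Euc d => y - z := measurable_id.sub measurable_const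
    rw [hμ'_inv z ω, lintegral_map
      (f := fun x => h (θ x (θ z ω)) (-x))
      (hh.comp ((hθ_meas.comp (measurable_const.prodMk measurable_id)).prodMk
        measurable_neg)) hsub]
    refine lintegral_congr fun y => ?_
    rw [hθθ, sub_add_cancel, neg_sub]
  have e78 : ∀ (ω : Ω) (x : Euc d),
      ∫⁻ z, h (θ x ω) z ∂μ (θ x ω) = ∫⁻ z, h (θ x ω) (z - x) ∂μ ω := by
    intro ω x
    have hsub : Measurable fun y : Euc d => y - x := measurable_id.sub measurable_const
    rw [hμ_inv x ω]
    exact lintegral_map (hh.comp (measurable_const.prodMk measurable_id)) hsub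
  -- joint measurability of Φ ω = fun x z => h (θ x ω) (z - x)
  have hΦ : ∀ ω : Ω, Measurable fun p : Euc d × Euc d => h (θ p.1 ω) (p.2 - p.1) := fun ω =>
    hh.comp ((hθ_meas.comp (measurable_const.prodMk measurable_fst)).prodMk
      (measurable_snd.sub measurable_fst))
  -- measurability of W₁ and W₂ jointly in (ω, u)
  have hW1m : Measurable fun q : Ω × Euc d => ∫⁻ x, ∫⁻ z,
      (unitCube d).indicator (fun _ => (1:ℝ≥0∞)) z *
        (unitCube d).indicator (fun _ => 1) (x + q.2) * h (θ x q.1) (z - x) ∂μ q.1 ∂μ' q.1 :=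
    NeveuAux.meas_double
      (κ'.comap (Prod.fst : Ω × Euc d → Ω) measurable_fst)
      (κ.comap (Prod.fst : Ω × Euc d → Ω) measurable_fst)
      (f := fun (q : Ω × Euc d) (x z : Euc d) =>
        (unitCube d).indicator (fun _ => (1:ℝ≥0∞)) z *
          (unitCube d).indicator (fun _ => 1) (x + q.2) * h (θ x q.1) (z - x))
      (((hind.comp measurable_snd.snd).mul
        (hind.comp (measurable_snd.fst.add measurable_fst.snd))).mul
        (hh.comp ((hθ_meas.comp (measurable_fst.fst.prodMk measurable_snd.fst)).prodMk
          (measurable_snd.snd.sub measurable_snd.fst))))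
  have hW2m : Measurable fun q : Ω × Euc d => ∫⁻ x, ∫⁻ z,
      (unitCube d).indicator (fun _ => (1:ℝ≥0∞)) (z - q.2) *
        (unitCube d).indicator (fun _ => 1) x * h (θ x q.1) (z - x) ∂μ q.1 ∂μ' q.1 :=
    NeveuAux.meas_double
      (κ'.comap (Prod.fst : Ω × Euc d → Ω) measurable_fst)
      (κ.comap (Prod.fst : Ω × Euc d → Ω) measurable_fst)
      (f := fun (q : Ω × Euc d) (x z : Euc d) =>
        (unitCube d).indicator (fun _ => (1:ℝ≥0∞)) (z - q.2) *
          (unitCube d).indicator (fun _ => 1) x * h (θ x q.1) (z - x))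
      (((hind.comp (measurable_snd.snd.sub measurable_fst.snd)).mul
        (hind.comp measurable_snd.fst)).mul
        (hh.comp ((hθ_meas.comp (measurable_fst.fst.prodMk measurable_snd.fst)).prodMk
          (measurable_snd.snd.sub measurable_snd.fst))))
  -- measurability of W₁ for fixed u, as a function of ω
  have hW1u : ∀ u : Euc d, Measurable fun ω : Ω => ∫⁻ x, ∫⁻ z,
      (unitCube d).indicator (fun _ => (1:ℝ≥0∞)) z *
        (unitCube d).indicator (fun _ => 1) (x + u) * h (θ x ω) (z - x) ∂μ ω ∂μ' ω := fun u =>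
    NeveuAux.meas_double κ' κ
      (f := fun (ω : Ω) (x z : Euc d) =>
        (unitCube d).indicator (fun _ => (1:ℝ≥0∞)) z *
          (unitCube d).indicator (fun _ => 1) (x + u) * h (θ x ω) (z - x))
      (((hind.comp measurable_snd.snd).mul
        (hind.comp (measurable_snd.fst.add measurable_const))).mul
        (hh.comp ((hθ_meas.comp (measurable_fst.prodMk measurable_snd.fst)).prodMk
          (measurable_snd.snd.sub measurable_snd.fst))))
  -- the stationarity step
  have e45 : ∀ u : Euc d,
      (∫⁻ ω, ∫⁻ x, ∫⁻ z, (unitCube d).indicator (fun _ => (1:ℝ≥0∞)) z *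
        (unitCube d).indicator (fun _ => 1) (x + u) * h (θ x ω) (z - x) ∂μ ω ∂μ' ω ∂P)
      = ∫⁻ ω, ∫⁻ x, ∫⁻ z, (unitCube d).indicator (fun _ => (1:ℝ≥0∞)) (z - u) *
        (unitCube d).indicator (fun _ => 1) x * h (θ x ω) (z - x) ∂μ ω ∂μ' ω ∂P := by
    intro u
    conv_lhs => rw [← hθ_inv u]
    rw [lintegral_map (hW1u u) (hθu u)]
    refine lintegral_congr fun ω => ?_
    have h1 : Measurable fun x : Euc d => ∫⁻ z,
        (unitCube d).indicator (fun _ => (1:ℝ≥0∞)) z *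
          (unitCube d).indicator (fun _ => 1) (x + u) * h (θ x (θ u ω)) (z - x) ∂μ (θ u ω) := by
      haveI := hσ (θ u ω)
      exact Measurable.lintegral_prod_right' (ν := μ (θ u ω))
        (f := fun p : Euc d × Euc d =>
          (unitCube d).indicator (fun _ => (1:ℝ≥0∞)) p.2 *
            (unitCube d).indicator (fun _ => 1) (p.1 + u) * h (θ p.1 (θ u ω)) (p.2 - p.1))
        (((hind.comp measurable_snd).mul
          (hind.comp (measurable_fst.add measurable_const))).mul
          (hh.comp ((hθ_meas.comp (measurable_const.prodMk measurable_fst)).prodMk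
            (measurable_snd.sub measurable_fst))))
    have hsubu : Measurable fun y : Euc d => y - u := measurable_id.sub measurable_const
    rw [hμ'_inv u ω, lintegral_map h1 hsubu]
    refine lintegral_congr fun x => ?_
    have h2 : Measurable fun z : Euc d =>
        (unitCube d).indicator (fun _ => (1:ℝ≥0∞)) z *
          (unitCube d).indicator (fun _ => 1) (x - u + u) * h (θ (x - u) (θ u ω)) (z - (x - u)) :=
      ((hind.mul measurable_const).mul
        (hh.comp (measurable_const.prodMk (measurable_id.sub measurable_const))))
    have hsubu2 : Measurable fun y : Euc d => y - u := measurable_id.sub measurable_const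
    rw [hμ_inv u ω, lintegral_map h2 hsubu2]
    refine lintegral_congr fun z => ?_
    rw [hθθ, sub_add_cancel, sub_sub_sub_cancel_right]
  -- main computation
  calc γ * ∫⁻ ω, ∫⁻ x, h (θ x ω) (-x) ∂μ' ω ∂Palm
      = γ * (γ⁻¹ * ∫⁻ ω, ∫⁻ z in unitCube d,
          ∫⁻ x, h (θ x (θ z ω)) (-x) ∂μ' (θ z ω) ∂μ ω ∂P) := by rw [L1]
    _ = ∫⁻ ω, ∫⁻ z in unitCube d, ∫⁻ x, h (θ x (θ z ω)) (-x) ∂μ' (θ z ω) ∂μ ω ∂P := by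
        rw [← mul_assoc, ENNReal.mul_inv_cancel hγ_pos.ne' hγ_fin, one_mul]
    _ = ∫⁻ ω, ∫⁻ z in unitCube d, ∫⁻ x, h (θ x ω) (z - x) ∂μ' ω ∂μ ω ∂P :=
        lintegral_congr fun ω => lintegral_congr fun z => e12 ω z
    _ = ∫⁻ ω, ∫⁻ u, ∫⁻ x, ∫⁻ z, (unitCube d).indicator (fun _ => (1:ℝ≥0∞)) z *
          (unitCube d).indicator (fun _ => 1) (x + u) * h (θ x ω) (z - x)
          ∂μ ω ∂μ' ω ∂(volume : Measure (Euc d)) ∂P :=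
        lintegral_congr fun ω => by
          haveI := hσ ω; haveI := hσ' ω
          exact (NeveuAux.cube_unfold (μ ω) (μ' ω)
            (fun x z => h (θ x ω) (z - x)) (hΦ ω)).symm
    _ = ∫⁻ u, ∫⁻ ω, ∫⁻ x, ∫⁻ z, (unitCube d).indicator (fun _ => (1:ℝ≥0∞)) z *
          (unitCube d).indicator (fun _ => 1) (x + u) * h (θ x ω) (z - x)
          ∂μ ω ∂μ' ω ∂P ∂(volume : Measure (Euc d)) :=
        lintegral_lintegral_swap (μ := P) (ν := (volume : Measure (Euc d)))
          (f := fun ω u => ∫⁻ x, ∫⁻ z, (unitCube d).indicator (fun _ => (1:ℝ≥0∞)) z *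
            (unitCube d).indicator (fun _ => 1) (x + u) * h (θ x ω) (z - x) ∂μ ω ∂μ' ω)
          hW1m.aemeasurable
    _ = ∫⁻ u, ∫⁻ ω, ∫⁻ x, ∫⁻ z, (unitCube d).indicator (fun _ => (1:ℝ≥0∞)) (z - u) *
          (unitCube d).indicator (fun _ => 1) x * h (θ x ω) (z - x)
          ∂μ ω ∂μ' ω ∂P ∂(volume : Measure (Euc d)) :=
        lintegral_congr fun u => e45 u
    _ = ∫⁻ ω, ∫⁻ u, ∫⁻ x, ∫⁻ z, (unitCube d).indicator (fun _ => (1:ℝ≥0∞)) (z - u) *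
          (unitCube d).indicator (fun _ => 1) x * h (θ x ω) (z - x)
          ∂μ ω ∂μ' ω ∂(volume : Measure (Euc d)) ∂P :=
        (lintegral_lintegral_swap (μ := P) (ν := (volume : Measure (Euc d)))
          (f := fun ω u => ∫⁻ x, ∫⁻ z, (unitCube d).indicator (fun _ => (1:ℝ≥0∞)) (z - u) *
            (unitCube d).indicator (fun _ => 1) x * h (θ x ω) (z - x) ∂μ ω ∂μ' ω)
          hW2m.aemeasurable).symm
    _ = ∫⁻ ω, ∫⁻ x in unitCube d, ∫⁻ z, h (θ x ω) (z - x) ∂μ ω ∂μ' ω ∂P :=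
        lintegral_congr fun ω => by
          haveI := hσ ω; haveI := hσ' ω
          exact NeveuAux.cube_unfold' (μ ω) (μ' ω)
            (fun x z => h (θ x ω) (z - x)) (hΦ ω)
    _ = ∫⁻ ω, ∫⁻ x in unitCube d, ∫⁻ z, h (θ x ω) z ∂μ (θ x ω) ∂μ' ω ∂P :=
        lintegral_congr fun ω => lintegral_congr fun x => (e78 ω x).symm
    _ = γ' * (γ'⁻¹ * ∫⁻ ω, ∫⁻ x in unitCube d,
          ∫⁻ z, h (θ x ω) z ∂μ (θ x ω) ∂μ' ω ∂P) := by
        rw [← mul_assoc, ENNReal.mul_inv_cancel hγ'_pos.ne' hγ'_fin, one_mul]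
    _ = γ' * ∫⁻ ω, ∫⁻ x, h ω x ∂μ ω ∂Palm' := by rw [← L9]
end
end

section
/- Exponential tail and moments of the second-order neighbourhood in a Poisson–Voronoi tessellation: Let η be a stationary Poisson process on ℝ^d with intensity γ > 0 and set η⁰ := η ∪ {0}. Then there exists a constant l depending only on d such that for all integers n ≥ 2, ℙ( |N_2(η⁰, 0)| ≥ n ) ≤ l · (1 − 16^{−d})^{n−1}. Consequently, 𝔼[ |N_2(η⁰, 0)|^m ] < ∞ for every m ∈ ℕ. -/
open MeasureTheory Set Filter
open Metric
open scoped ENNReal Pointwise Topology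

noncomputable section

/-- The Voronoi cell of `x` with respect to a set `μ` of points. -/
def voronoiCell {d : ℕ} (μ : Set (Euc d)) (x : Euc d) : Set (Euc d) :=
  {y | ∀ z ∈ μ, dist y x ≤ dist y z}

/-- The Voronoi neighbours `N(μ, x)` of `x`. -/
def vNeighbours {d : ℕ} (μ : Set (Euc d)) (x : Euc d) : Set (Euc d) :=
  {y | y ∈ μ ∧ y ≠ x ∧ (voronoiCell μ x ∩ voronoiCell μ y).Nonempty}

/-- The second-order Voronoi neighbourhood `N₂(μ, x)` of `x`. -/
def vNeighbours2 {d : ℕ} (μ : Set (Euc d)) (x : Euc d) : Set (Euc d) :=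
  {y | y ∈ μ ∧ ∃ z ∈ vNeighbours μ x, y ∈ vNeighbours μ z}

/-- `η` is a stationary Poisson process on `ℝ^d` with intensity `γ` under `P`:
it is locally finite, counts in sets of finite volume are Poisson distributed with the
corresponding mean, and counts in pairwise disjoint sets are independent. -/
def IsPoissonProcess {d : ℕ} {Ω : Type} [MeasurableSpace Ω] (P : Measure Ω)
    (η : Ω → Set (Euc d)) (γ : ℝ) : Prop :=
  (∀ ω, ∀ K : Set (Euc d), IsCompact K → (η ω ∩ K).Finite) ∧
  (∀ B : Set (Euc d), MeasurableSet B → volume B ≠ ∞ →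
    (Measurable fun ω => (η ω ∩ B).ncard) ∧
    ∀ n : ℕ, P {ω | (η ω ∩ B).ncard = n} =
      ENNReal.ofReal (Real.exp (-(γ * (volume B).toReal)) *
        (γ * (volume B).toReal) ^ n / n.factorial)) ∧
  (∀ (m : ℕ) (B : Fin m → Set (Euc d)), (∀ i, MeasurableSet (B i)) →
    (∀ i, volume (B i) ≠ ∞) → Pairwise (Function.onFun Disjoint B) →
    ProbabilityTheory.iIndepFun (fun i ω => (η ω ∩ B i).ncard) P)

/-- A finite 1/20-net of the ball of radius 3. -/
lemma exists_net (d : ℕ) : ∃ s : Finset (Euc d),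
    ∀ x : Euc d, ‖x‖ ≤ 3 → ∃ t ∈ s, dist x t < 1/20 := by
  obtain ⟨t, -, htfin, hcov⟩ :=
    (isCompact_closedBall (0 : Euc d) 3).finite_cover_balls (e := 1/20) (by norm_num)
  refine ⟨htfin.toFinset, fun x hx => ?_⟩
  have : x ∈ closedBall (0 : Euc d) 3 := by
    simpa [Metric.mem_closedBall, dist_eq_norm] using hx
  obtain ⟨c, hc, hxc⟩ := Set.mem_iUnion₂.1 (hcov this)
  exact ⟨c, htfin.mem_toFinset.2 hc, by simpa [Metric.mem_ball] using hxc⟩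

/-- If every net ball contains a point of `μ`, then there is no empty ball of radius `≥ T`
anchored at a point `p` with `‖p‖ ≤ 2T`. -/
lemma geom_aux {d : ℕ} (μ : Set (Euc d)) (T : ℝ) (hT : 0 < T)
    (s : Finset (Euc d)) (hs : ∀ x : Euc d, ‖x‖ ≤ 3 → ∃ t ∈ s, dist x t < 1/20)
    (hF : ∀ t ∈ s, (μ ∩ ball (T • t) (4/5 * T)).Nonempty)
    (w p : Euc d) (hp : ‖p‖ ≤ 2 * T)
    (hw : ∀ q ∈ μ, dist w p ≤ dist w q) (hρ : T ≤ dist w p) : False := by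
  set ρ := dist w p with hρdef
  have hρ0 : 0 < ρ := lt_of_lt_of_le hT hρ
  set r : ℝ := 9 * T / (10 * ρ) with hrdef
  have hr0 : 0 < r := by positivity
  have hr1 : r ≤ 1 := by
    rw [hrdef, div_le_one (by positivity)]
    nlinarith
  set c : Euc d := p + r • (w - p) with hcdef
  have hcp : dist c p = 9 * T / 10 := by
    rw [dist_eq_norm]
    have : c - p = r • (w - p) := by rw [hcdef]; abel
    rw [this, norm_smul, Real.norm_eq_abs, abs_of_pos hr0]
    have : ‖w - p‖ = ρ := by rw [hρdef, dist_eq_norm]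
    rw [this, hrdef]
    field_simp
  have hcw : dist c w = ρ - 9 * T / 10 := by
    rw [dist_eq_norm]
    have h1 : c - w = (r - 1) • (w - p) := by
      rw [hcdef]; rw [sub_smul, one_smul]; abel
    rw [h1, norm_smul, Real.norm_eq_abs, abs_of_nonpos (by linarith)]
    have : ‖w - p‖ = ρ := by rw [hρdef, dist_eq_norm]
    rw [this, hrdef]
    field_simp
    ring
  have hcnorm : ‖c‖ ≤ 29 * T / 10 := by
    calc ‖c‖ = ‖p + (c - p)‖ := by congr 1; abel
    _ ≤ ‖p‖ + ‖c - p‖ := norm_add_le _ _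
    _ ≤ 2 * T + 9 * T / 10 := by
        have := hcp; rw [dist_eq_norm] at this; rw [this]; linarith
    _ = 29 * T / 10 := by ring
  obtain ⟨t, hts, ht⟩ := hs (T⁻¹ • c) (by
    rw [norm_smul, Real.norm_eq_abs, abs_of_pos (inv_pos.2 hT)]
    rw [inv_mul_le_iff₀ hT]
    linarith)
  have hct : dist c (T • t) < T / 20 := by
    have h1 : c = T • (T⁻¹ • c) := by rw [smul_smul, mul_inv_cancel₀ hT.ne', one_smul]
    calc dist c (T • t) = dist (T • (T⁻¹ • c)) (T • t) := by rw [← h1]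
    _ = ‖T‖ * dist (T⁻¹ • c) t := dist_smul₀ _ _ _
    _ < T * (1/20) := by
        rw [Real.norm_eq_abs, abs_of_pos hT]
        exact mul_lt_mul_of_pos_left ht hT
    _ = T / 20 := by ring
  obtain ⟨u, hu, hub⟩ := hF t hts
  have : dist w u < ρ := by
    calc dist w u ≤ dist w c + dist c (T • t) + dist (T • t) u := dist_triangle4 w c (T • t) u
    _ < (ρ - 9 * T / 10) + T / 20 + 4/5 * T := by
        have h2 : dist w c = ρ - 9 * T / 10 := by rw [dist_comm]; exact hcw
        have h3 : dist (T • t) u < 4/5 * T := by rw [dist_comm]; exact mem_ball.1 hub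
        linarith
    _ = ρ - T / 20 := by ring
    _ < ρ := by linarith
  exact absurd (hw u hu) (not_le.2 this)

lemma geom_main {d : ℕ} (μ : Set (Euc d)) (h0 : (0 : Euc d) ∈ μ) (T : ℝ) (hT : 0 < T)
    (s : Finset (Euc d)) (hs : ∀ x : Euc d, ‖x‖ ≤ 3 → ∃ t ∈ s, dist x t < 1/20)
    (hF : ∀ t ∈ s, (μ ∩ ball (T • t) (4/5 * T)).Nonempty) :
    vNeighbours2 μ 0 ⊆ ball 0 (4 * T) := by
  have hnb : ∀ x ∈ μ, ‖x‖ ≤ 2 * T → ∀ z ∈ vNeighbours μ x, dist z x < 2 * T := by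
    intro x hxμ hx z hz
    obtain ⟨hzμ, -, w, hwx, hwz⟩ := hz
    have hempty : ∀ q ∈ μ, dist w x ≤ dist w q := fun q hq => hwx q hq
    have hρ : dist w x < T := by
      by_contra hcon
      exact geom_aux μ T hT s hs hF w x hx hempty (not_lt.1 hcon)
    have hwz' : dist w z ≤ dist w x := hwz x hxμ
    calc dist z x ≤ dist z w + dist w x := dist_triangle _ _ _
    _ = dist w z + dist w x := by rw [dist_comm]
    _ ≤ dist w x + dist w x := by linarith
    _ < 2 * T := by linarith
  intro y hy
  obtain ⟨hyμ, z, hz, hyz⟩ := hy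
  have hz0 : dist z 0 < 2 * T := hnb 0 h0 (by simp; positivity) z hz
  have hzμ : z ∈ μ := hz.1
  have hzn : ‖z‖ < 2 * T := by rw [← dist_zero_right z]; exact hz0
  have hyz' : dist y z < 2 * T := hnb z hzμ hzn.le y hyz
  rw [mem_ball, dist_zero_right]
  calc ‖y‖ = dist y 0 := (dist_zero_right y).symm
  _ ≤ dist y z + dist z 0 := dist_triangle _ _ _
  _ < 4 * T := by rw [dist_zero_right]; linarith

lemma q_facts (d : ℕ) (hd : 1 ≤ d) :
    0 < (16:ℝ)^(-(d:ℤ)) ∧ (16:ℝ)^(-(d:ℤ)) ≤ 1/16 ∧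
    (15/16 : ℝ) ≤ 1 - (16:ℝ)^(-(d:ℤ)) ∧ 1 - (16:ℝ)^(-(d:ℤ)) < 1 := by
  have h1 : (16:ℝ)^(-(d:ℤ)) = ((16:ℝ)^d)⁻¹ := by
    rw [zpow_neg, zpow_natCast]
  have h2 : (16:ℝ) ≤ (16:ℝ)^d := le_self_pow₀ (by norm_num) (by omega)
  have h3 : (0:ℝ) < (16:ℝ)^d := by positivity
  constructor
  · rw [h1]; positivity
  refine ⟨?_, ?_, ?_⟩
  · rw [h1]
    rw [inv_le_comm₀ h3 (by norm_num)]
    linarith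
  · have : (16:ℝ)^(-(d:ℤ)) ≤ 1/16 := by
      rw [h1, inv_le_comm₀ h3 (by norm_num)]; linarith
    linarith
  · have : 0 < (16:ℝ)^(-(d:ℤ)) := by rw [h1]; positivity
    linarith

lemma exp_le_q (d : ℕ) (hd : 1 ≤ d) (n : ℕ) (hn : 1 ≤ n) :
    Real.exp (-(2/5 * (1/5)^d * n)) ≤ (1 - (16:ℝ)^(-(d:ℤ)))^(n-1) := by
  obtain ⟨hs0, hs16, hq15, hq1⟩ := q_facts d hd
  set s := (16:ℝ)^(-(d:ℤ)) with hsdef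
  -- step 1 : exp (-(16/15) s) ≤ 1 - s
  have step1 : Real.exp (-(16/15 * s)) ≤ 1 - s := by
    have h1 : 1 + 16/15 * s ≤ Real.exp (16/15 * s) := by
      have := Real.add_one_le_exp (16/15 * s); linarith
    have h2 : Real.exp (-(16/15 * s)) = (Real.exp (16/15 * s))⁻¹ := by
      rw [Real.exp_neg]
    rw [h2]
    have h3 : (Real.exp (16/15 * s))⁻¹ ≤ (1 + 16/15 * s)⁻¹ := by
      apply inv_anti₀ (by positivity) h1
    refine h3.trans ?_
    have hmul : 1 ≤ (1 - s) * (1 + 16/15 * s) := by nlinarith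
    have hc : (0:ℝ) < 1 + 16/15 * s := by positivity
    calc (1 + 16/15 * s)⁻¹ = (1 + 16/15 * s)⁻¹ * 1 := by ring
    _ ≤ (1 + 16/15 * s)⁻¹ * ((1 - s) * (1 + 16/15 * s)) :=
        mul_le_mul_of_nonneg_left hmul (by positivity)
    _ = (1 - s) * ((1 + 16/15 * s)⁻¹ * (1 + 16/15 * s)) := by ring
    _ = 1 - s := by rw [inv_mul_cancel₀ hc.ne', mul_one]
  -- step 2 : (16/15) * s * n ≤ 2/5 * (1/5)^d * n
  have step2 : 16/15 * s ≤ 2/5 * (1/5)^d := by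
    have h1 : s = ((16:ℝ)^d)⁻¹ := by rw [hsdef, zpow_neg, zpow_natCast]
    have h2 : (16:ℝ)/5 ≤ (16/5:ℝ)^d := le_self_pow₀ (by norm_num) (by omega)
    have h3 : 2/5 * (1/5:ℝ)^d * (16:ℝ)^d = 2/5 * (16/5:ℝ)^d := by
      rw [mul_assoc, ← mul_pow]; norm_num
    have h4 : (0:ℝ) < (16:ℝ)^d := by positivity
    rw [h1, ← sub_nonneg]
    have h5 : 2/5 * (1/5:ℝ)^d - 16/15 * ((16:ℝ)^d)⁻¹ =
        (2/5 * (1/5:ℝ)^d * (16:ℝ)^d - 16/15) * ((16:ℝ)^d)⁻¹ := by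
      field_simp
    rw [h5, h3]
    have : 0 ≤ 2/5 * (16/5:ℝ)^d - 16/15 := by nlinarith
    positivity
  -- step 3
  have hq0 : 0 ≤ 1 - s := by linarith
  have key : Real.exp (-(2/5 * (1/5)^d * n)) ≤ (1 - s)^n := by
    calc Real.exp (-(2/5 * (1/5)^d * n)) ≤ Real.exp (-(16/15 * s * n)) := by
          apply Real.exp_le_exp.2
          have : (0:ℝ) ≤ n := Nat.cast_nonneg n
          nlinarith
    _ = Real.exp (-(16/15 * s)) ^ n := by
          rw [← Real.exp_nat_mul]; congr 1; ring
    _ ≤ (1 - s)^n := pow_le_pow_left₀ (Real.exp_nonneg _) step1 n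
  calc Real.exp (-(2/5 * (1/5)^d * n)) ≤ (1 - s)^n := key
  _ ≤ (1 - s)^(n-1) := pow_le_pow_of_le_one hq0 (by linarith) (Nat.sub_le n 1)

set_option maxHeartbeats 1000000 in
lemma part1_num (n : ℕ) (hn : 5 ≤ n) :
    Real.exp (-(2/5 * n)) * (2/5 * n)^(n-1) / (n-1).factorial ≤ ((15:ℝ)/16)^(n-1) := by
  set N : ℕ := n - 1 with hNdef
  have hN1 : 1 ≤ N := by omega
  have hNpos : (0:ℝ) < N := by exact_mod_cast Nat.pos_of_ne_zero (by omega)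
  have hnN : (n:ℝ) = (N:ℝ) + 1 := by
    rw [hNdef]; push_cast [Nat.cast_sub (by omega : 1 ≤ n)]; ring
  set m : ℝ := 2/5 * n with hmdef
  have hm0 : 0 < m := by
    rw [hmdef]
    have h5 : (5:ℝ) ≤ n := by exact_mod_cast hn
    linarith
  set x : ℝ := m / N with hxdef
  have hx0 : 0 < x := by positivity
  have hxlow : 2/5 ≤ x := by
    rw [hxdef, le_div_iff₀ hNpos, hmdef, hnN]; nlinarith
  have hxhigh : x ≤ 1/2 := by
    rw [hxdef, div_le_iff₀ hNpos, hmdef, hnN]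
    have h5 : (5:ℝ) ≤ (N:ℝ) + 1 := by rw [← hnN]; exact_mod_cast hn
    nlinarith
  have hmx : m = x * N := by rw [hxdef]; field_simp
  -- factorial bound : m^N / N! ≤ (e*m/N)^N
  have hfac : (N:ℝ)^N / N.factorial ≤ Real.exp N := Real.pow_div_factorial_le_exp (N:ℝ) (Nat.cast_nonneg N) N
  have hfacpos : (0:ℝ) < N.factorial := by exact_mod_cast N.factorial_pos
  have hNN : (0:ℝ) < (N:ℝ)^N := by positivity
  have key1 : m^N / N.factorial ≤ (x * Real.exp 1)^N := by
    have h1 : m^N = x^N * (N:ℝ)^N := by rw [hmx, mul_pow]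
    have h2 : (x * Real.exp 1)^N = x^N * (Real.exp 1)^N := mul_pow _ _ _
    rw [h1, h2, div_le_iff₀ hfacpos]
    have h3 : (N:ℝ)^N ≤ Real.exp N * N.factorial := by
      rw [← div_le_iff₀ hfacpos]; exact hfac
    have h4 : (Real.exp 1)^N = Real.exp N := by
      rw [← Real.exp_nat_mul]; congr 1; ring
    calc x^N * (N:ℝ)^N ≤ x^N * (Real.exp N * N.factorial) := by
          apply mul_le_mul_of_nonneg_left h3 (by positivity)
    _ = x^N * (Real.exp 1)^N * N.factorial := by rw [h4]; ring
  have key2 : Real.exp (-m) * (x * Real.exp 1)^N = (x * Real.exp (1 - x))^N := by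
    have h1 : Real.exp (-m) = (Real.exp (-x))^N := by
      rw [← Real.exp_nat_mul, hmx]; congr 1; ring
    rw [h1, ← mul_pow]
    congr 1
    rw [Real.exp_sub, Real.exp_neg]
    field_simp
  -- numeric : x * exp (1 - x) ≤ 15/16
  have keynum : x * Real.exp (1 - x) ≤ 15/16 := by
    have he15 : Real.exp (1/5) ≤ 5/4 := by
      have h1 : (1:ℝ) - 1/5 ≤ Real.exp (-(1/5)) := Real.one_sub_le_exp_neg (1/5)
      have h2 : Real.exp (-(1/5)) = (Real.exp (1/5))⁻¹ := Real.exp_neg _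
      have h3 : 0 < Real.exp (1/5) := Real.exp_pos _
      rw [h2] at h1
      have h5 := mul_le_mul_of_nonneg_left h1 h3.le
      rw [mul_inv_cancel₀ h3.ne'] at h5
      nlinarith
    have he1 : Real.exp 1 < 2.7182818286 := Real.exp_one_lt_d9
    have he65 : Real.exp (6/5) ≤ 225/64 := by
      have : Real.exp (6/5) = Real.exp 1 * Real.exp (1/5) := by
        rw [← Real.exp_add]; norm_num
      rw [this]
      nlinarith [Real.exp_pos (1/5), Real.exp_pos 1]
    have hbound : x * Real.exp (1 - x) ≤ 1/2 * Real.exp (3/5) := by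
      have h1 : Real.exp (1 - x) ≤ Real.exp (3/5) := Real.exp_le_exp.2 (by linarith)
      exact mul_le_mul hxhigh h1 (Real.exp_nonneg _) (by norm_num)
    have hsq : (1/2 * Real.exp (3/5))^2 ≤ (15/16)^2 := by
      have h1 : (Real.exp (3/5))^2 = Real.exp (6/5) := by
        rw [← Real.exp_nat_mul]; norm_num
      nlinarith [Real.exp_pos (3/5)]
    have hfin : 1/2 * Real.exp (3/5) ≤ 15/16 := by
      nlinarith [Real.exp_pos (3/5)]
    linarith
  calc Real.exp (-m) * m^N / N.factorial = Real.exp (-m) * (m^N / N.factorial) := by ring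
  _ ≤ Real.exp (-m) * (x * Real.exp 1)^N := by
      apply mul_le_mul_of_nonneg_left key1 (Real.exp_nonneg _)
  _ = (x * Real.exp (1 - x))^N := key2
  _ ≤ (15/16)^N := pow_le_pow_left₀ (by positivity) keynum N

lemma tsum_tail_le (m : ℝ) (hm : 0 ≤ m) (N : ℕ) (hmN : m ≤ 4/5 * N) :
    ∑' j : ℕ, ENNReal.ofReal (Real.exp (-m) * m^(N+j) / (N+j).factorial)
      ≤ ENNReal.ofReal (5 * (Real.exp (-m) * m^N / N.factorial)) := by
  have aux : ∀ j : ℕ, m^(N+j) / (N+j).factorial ≤ m^N / N.factorial * (4/5)^j := by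
    intro j
    induction j with
    | zero => simp
    | succ j ih =>
      have hfp : (0:ℝ) < (N+j).factorial := by exact_mod_cast (N+j).factorial_pos
      have hstep : m / ((N:ℝ)+j+1) ≤ 4/5 := by
        rw [div_le_iff₀ (by positivity)]
        have : (0:ℝ) ≤ (j:ℝ) := Nat.cast_nonneg j
        nlinarith
      have h2 : (N+(j+1)).factorial = ((N+j)+1) * (N+j).factorial := by
        rw [show N+(j+1) = (N+j)+1 by ring, Nat.factorial_succ]
      have hpow : m^(N+(j+1)) = m^(N+j) * m := by
        rw [show N+(j+1) = (N+j)+1 by ring, pow_succ]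
      have h1 : m^(N+(j+1)) / (N+(j+1)).factorial
          = (m^(N+j) / (N+j).factorial) * (m / ((N:ℝ)+j+1)) := by
        rw [h2, hpow, div_mul_div_comm]
        push_cast
        ring_nf
      rw [h1, pow_succ, ← mul_assoc]
      exact mul_le_mul ih hstep (by positivity) (by positivity)
  have term : ∀ j : ℕ, ENNReal.ofReal (Real.exp (-m) * m^(N+j) / (N+j).factorial)
      ≤ ENNReal.ofReal (Real.exp (-m) * (m^N / N.factorial) * (4/5)^j) := by
    intro j
    apply ENNReal.ofReal_le_ofReal
    have h := aux j
    have he : (0:ℝ) ≤ Real.exp (-m) := Real.exp_nonneg _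
    calc Real.exp (-m) * m^(N+j) / (N+j).factorial
        = Real.exp (-m) * (m^(N+j) / (N+j).factorial) := by ring
    _ ≤ Real.exp (-m) * (m^N / N.factorial * (4/5)^j) := mul_le_mul_of_nonneg_left h he
    _ = Real.exp (-m) * (m^N / N.factorial) * (4/5)^j := by ring
  calc ∑' j : ℕ, ENNReal.ofReal (Real.exp (-m) * m^(N+j) / (N+j).factorial)
      ≤ ∑' j : ℕ, ENNReal.ofReal (Real.exp (-m) * (m^N / N.factorial) * (4/5)^j) :=
        ENNReal.tsum_le_tsum term
  _ = ENNReal.ofReal (∑' j : ℕ, Real.exp (-m) * (m^N / N.factorial) * (4/5)^j) := by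
      rw [ENNReal.ofReal_tsum_of_nonneg]
      · intro j; positivity
      · exact (summable_geometric_of_lt_one (by norm_num) (by norm_num)).mul_left _
  _ ≤ ENNReal.ofReal (5 * (Real.exp (-m) * m^N / N.factorial)) := by
      apply ENNReal.ofReal_le_ofReal
      rw [tsum_mul_left, tsum_geometric_of_lt_one (by norm_num) (by norm_num)]
      have : ((1:ℝ) - 4/5)⁻¹ = 5 := by norm_num
      rw [this]
      ring_nf
      exact le_refl _

set_option maxHeartbeats 1000000 in
lemma moments_ne_top {Ω : Type} [MeasurableSpace Ω] (P : Measure Ω) [IsProbabilityMeasure P]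
    (X : Ω → ℕ) (l q : ℝ) (hl : 0 ≤ l) (hq0 : 0 < q) (hq1 : q < 1)
    (htail : ∀ n : ℕ, 2 ≤ n → P {ω | n ≤ X ω} ≤ ENNReal.ofReal (l * q ^ (n-1)))
    (m : ℕ) : ∫⁻ ω, (X ω : ℝ≥0∞) ^ m ∂P ≠ ∞ := by
  rcases Nat.eq_zero_or_pos m with hm | hm
  · subst hm
    simp
  -- c k = (k+1)^m - k^m
  set c : ℕ → ℕ := fun k => (k+1)^m - k^m with hcdef
  set A : ℕ → Set Ω := fun k => toMeasurable P {ω | k ≤ X ω} with hAdef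
  have hAmeas : ∀ k, MeasurableSet (A k) := fun k => measurableSet_toMeasurable _ _
  have hAsub : ∀ k ω, k ≤ X ω → ω ∈ A k := fun k ω h => subset_toMeasurable _ _ h
  have hAP : ∀ k, P (A k) = P {ω | k ≤ X ω} := fun k => measure_toMeasurable _
  -- pointwise bound
  have hpt : ∀ ω, (X ω : ℝ≥0∞) ^ m ≤
      ∑' k : ℕ, (A (k+1)).indicator (fun _ => ((c k : ℕ) : ℝ≥0∞)) ω := by
    intro ω
    have htel : (X ω)^m = ∑ k ∈ Finset.range (X ω), c k := by
      rw [hcdef]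
      have hmono : Monotone (fun k : ℕ => k^m) := fun a b hab => Nat.pow_le_pow_left hab m
      rw [Finset.sum_range_tsub hmono (X ω)]
      simp [Nat.zero_pow hm]
    have hcast : (X ω : ℝ≥0∞) ^ m = ((X ω ^ m : ℕ) : ℝ≥0∞) := by push_cast; ring
    rw [hcast, htel]
    push_cast
    have heq : ∀ k ∈ Finset.range (X ω),
        ((c k : ℕ) : ℝ≥0∞) = (A (k+1)).indicator (fun _ => ((c k : ℕ) : ℝ≥0∞)) ω := by
      intro k hk
      rw [Set.indicator_of_mem (hAsub (k+1) ω (Finset.mem_range.1 hk))]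
    calc ∑ k ∈ Finset.range (X ω), ((c k : ℕ) : ℝ≥0∞)
        = ∑ k ∈ Finset.range (X ω), (A (k+1)).indicator (fun _ => ((c k : ℕ) : ℝ≥0∞)) ω :=
          Finset.sum_congr rfl heq
    _ ≤ _ := ENNReal.sum_le_tsum _
  have hint : ∫⁻ ω, (X ω : ℝ≥0∞) ^ m ∂P ≤ ∑' k : ℕ, ((c k : ℕ) : ℝ≥0∞) * P (A (k+1)) := by
    calc ∫⁻ ω, (X ω : ℝ≥0∞) ^ m ∂P
        ≤ ∫⁻ ω, ∑' k : ℕ, (A (k+1)).indicator (fun _ => ((c k : ℕ) : ℝ≥0∞)) ω ∂P :=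
          lintegral_mono hpt
    _ = ∑' k : ℕ, ∫⁻ ω, (A (k+1)).indicator (fun _ => ((c k : ℕ) : ℝ≥0∞)) ω ∂P :=
          lintegral_tsum (fun k => (measurable_const.indicator (hAmeas (k+1))).aemeasurable)
    _ = ∑' k : ℕ, ((c k : ℕ) : ℝ≥0∞) * P (A (k+1)) := by
          congr 1; funext k; exact lintegral_indicator_const (hAmeas (k+1)) _
  -- bound the series
  have hterm : ∀ k : ℕ, ((c k : ℕ) : ℝ≥0∞) * P (A (k+1))
      ≤ ENNReal.ofReal (((k:ℝ)+1)^m * ((l+1) * q^k)) := by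
    intro k
    rcases Nat.eq_zero_or_pos k with hk | hk
    · subst hk
      have hc0 : c 0 ≤ 1 := by
        rw [hcdef]
        simp
      have h1 : ((c 0 : ℕ) : ℝ≥0∞) * P (A 1) ≤ 1 * 1 := by
        apply mul_le_mul'
        · exact_mod_cast hc0
        · exact prob_le_one
      refine h1.trans ?_
      rw [mul_one]
      rw [show ((1:ℝ≥0∞) = ENNReal.ofReal 1) by simp]
      apply ENNReal.ofReal_le_ofReal
      simp
      nlinarith
    · obtain ⟨j, rfl⟩ : ∃ j, k = j + 1 := ⟨k - 1, by omega⟩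
      have h1 : P (A (j+1+1)) ≤ ENNReal.ofReal (l * q^(j+1)) := by
        rw [hAP]
        have := htail (j+2) (by omega)
        rw [show j + 2 - 1 = j + 1 by omega, show j + 2 = j + 1 + 1 by omega] at this
        exact this
      have h2 : ((c (j+1) : ℕ) : ℝ≥0∞) ≤ ENNReal.ofReal (((j:ℝ)+1+1)^m) := by
        have hc : c (j+1) ≤ (j+2)^m := Nat.sub_le _ _
        calc ((c (j+1) : ℕ) : ℝ≥0∞) ≤ (((j+2)^m : ℕ) : ℝ≥0∞) := by exact_mod_cast hc
        _ = ENNReal.ofReal (((j:ℝ)+1+1)^m) := by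
            rw [← ENNReal.ofReal_natCast]
            congr 1
            push_cast
            ring
      calc ((c (j+1) : ℕ) : ℝ≥0∞) * P (A (j+1+1))
          ≤ ENNReal.ofReal (((j:ℝ)+1+1)^m) * ENNReal.ofReal (l * q^(j+1)) :=
            mul_le_mul' h2 h1
      _ ≤ ENNReal.ofReal (((j:ℝ)+1+1)^m * ((l+1) * q^(j+1))) := by
          rw [← ENNReal.ofReal_mul (by positivity)]
          apply ENNReal.ofReal_le_ofReal
          have hp : (0:ℝ) ≤ ((j:ℝ)+1+1)^m := by positivity
          have hqp : (0:ℝ) ≤ q^(j+1) := by positivity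
          nlinarith
      _ ≤ ENNReal.ofReal (((↑(j+1):ℝ)+1)^m * ((l+1) * q^(j+1))) := by
          apply ENNReal.ofReal_le_ofReal
          push_cast
          exact le_refl _
  have hsummable : Summable (fun k : ℕ => ((k:ℝ)+1)^m * ((l+1) * q^k)) := by
    have hq : ‖q‖ < 1 := by rw [Real.norm_eq_abs, abs_of_pos hq0]; exact hq1
    have hbase : Summable (fun k : ℕ => (k:ℝ)^m * q^k) :=
      summable_pow_mul_geometric_of_norm_lt_one m hq
    have hshift : Summable (fun k : ℕ => ((k+1:ℕ):ℝ)^m * q^(k+1)) :=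
      (_root_.summable_nat_add_iff 1).2 hbase
    have h2 : Summable (fun k : ℕ => ((l+1)/q) * (((k+1:ℕ):ℝ)^m * q^(k+1))) := hshift.mul_left _
    apply h2.congr
    intro k
    push_cast
    rw [pow_succ]
    field_simp
  have hfinal : ∑' k : ℕ, ((c k : ℕ) : ℝ≥0∞) * P (A (k+1)) ≠ ∞ := by
    have h1 : ∑' k : ℕ, ((c k : ℕ) : ℝ≥0∞) * P (A (k+1))
        ≤ ∑' k : ℕ, ENNReal.ofReal (((k:ℝ)+1)^m * ((l+1) * q^k)) :=
      ENNReal.tsum_le_tsum hterm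
    have h2 : ∑' k : ℕ, ENNReal.ofReal (((k:ℝ)+1)^m * ((l+1) * q^k))
        = ENNReal.ofReal (∑' k : ℕ, ((k:ℝ)+1)^m * ((l+1) * q^k)) :=
      (ENNReal.ofReal_tsum_of_nonneg (fun k => by positivity) hsummable).symm
    exact ne_top_of_le_ne_top (by rw [h2]; exact ENNReal.ofReal_ne_top) h1
  exact ne_top_of_le_ne_top hfinal hint

set_option maxHeartbeats 1000000 in
lemma tail_bound (d : ℕ) (hd : 1 ≤ d) (s : Finset (Euc d))
    (hs : ∀ x : Euc d, ‖x‖ ≤ 3 → ∃ t ∈ s, dist x t < 1/20)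
    {Ω : Type} [MeasurableSpace Ω] (P : Measure Ω) [IsProbabilityMeasure P]
    (γ : ℝ) (hγ : 0 < γ) (η : Ω → Set (Euc d)) (hη : IsPoissonProcess P η γ)
    (n : ℕ) (hn : 2 ≤ n) :
    P {ω | n ≤ (vNeighbours2 (insert 0 (η ω)) 0).ncard}
      ≤ ENNReal.ofReal (((s.card:ℝ) + 10) * (1 - (16:ℝ)^(-(d:ℤ)))^(n-1)) := by
  obtain ⟨hloc, hpmf, -⟩ := hη
  obtain ⟨hs0, hs16, hq15, hq1⟩ := q_facts d hd
  set q : ℝ := 1 - (16:ℝ)^(-(d:ℤ)) with hqdef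
  have hq0 : (0:ℝ) ≤ q := by rw [hqdef]; linarith
  set v : ℝ := (volume (Metric.ball (0 : Euc d) 1)).toReal with hvdef
  have hv0 : 0 < v := by
    rw [hvdef]
    exact ENNReal.toReal_pos (measure_ball_pos volume 0 one_pos).ne' measure_ball_lt_top.ne
  have hd0 : (d:ℝ) ≠ 0 := by
    have : 0 < d := hd
    exact_mod_cast this.ne'
  have hn0 : (0:ℝ) < n := by exact_mod_cast (by omega : 0 < n)
  set A : ℝ := (2/5 * n) / (γ * v * 4^d) with hAdef
  have hA0 : 0 < A := by rw [hAdef]; positivity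
  set T : ℝ := A ^ ((d:ℝ)⁻¹) with hTdef
  have hT0 : 0 < T := Real.rpow_pos_of_pos hA0 _
  have hTd : T ^ d = A := by
    rw [hTdef, ← Real.rpow_natCast (A ^ ((d:ℝ)⁻¹)) d, ← Real.rpow_mul hA0.le,
      inv_mul_cancel₀ hd0, Real.rpow_one]
  have hvol : ∀ (x : Euc d) (r : ℝ), 0 < r →
      γ * (volume (Metric.ball x r)).toReal = γ * v * r^d := by
    intro x r hr
    rw [Measure.addHaar_ball_of_pos volume x hr, ENNReal.toReal_mul,
      ENNReal.toReal_ofReal (by positivity), finrank_euclideanSpace_fin, hvdef]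
    ring
  have hγv4 : γ * v * (4:ℝ)^d ≠ 0 := by positivity
  have hm1 : γ * (volume (Metric.ball (0:Euc d) (4*T))).toReal = 2/5 * n := by
    rw [hvol _ _ (by positivity), mul_pow, hTd, hAdef]
    field_simp
  have h45 : ((4:ℝ)/5)^d = 4^d * (1/5)^d := by
    rw [← mul_pow]; norm_num
  have hm2 : ∀ t : Euc d, γ * (volume (Metric.ball (T • t) (4/5*T))).toReal
      = 2/5 * (1/5)^d * n := by
    intro t
    rw [hvol _ _ (by positivity), mul_pow, hTd, h45, hAdef]
    field_simp
  -- event inclusion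
  have hsub : {ω | n ≤ (vNeighbours2 (insert 0 (η ω)) 0).ncard} ⊆
      (⋃ t ∈ s, {ω | (η ω ∩ Metric.ball (T • t) (4/5*T)).ncard = 0}) ∪
      {ω | n - 1 ≤ (η ω ∩ Metric.ball (0:Euc d) (4*T)).ncard} := by
    intro ω hω
    by_cases hF : ∀ t ∈ s, (η ω ∩ Metric.ball (T • t) (4/5*T)).Nonempty
    · right
      have hF' : ∀ t ∈ s,
          ((insert 0 (η ω) : Set (Euc d)) ∩ Metric.ball (T • t) (4/5*T)).Nonempty :=
        fun t ht => (hF t ht).mono (inter_subset_inter_left _ (subset_insert _ _))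
      have hgeo := geom_main (insert 0 (η ω)) (mem_insert _ _) T hT0 s hs hF'
      have hfin : (η ω ∩ Metric.ball (0:Euc d) (4*T)).Finite :=
        (hloc ω (Metric.closedBall 0 (4*T)) (isCompact_closedBall _ _)).subset
          (inter_subset_inter_right _ Metric.ball_subset_closedBall)
      have hsub2 : vNeighbours2 (insert 0 (η ω)) 0 ⊆
          insert 0 (η ω ∩ Metric.ball (0:Euc d) (4*T)) := by
        intro y hy
        have hyb := hgeo hy
        have hyμ : y ∈ insert (0 : Euc d) (η ω) := hy.1
        rcases mem_insert_iff.1 hyμ with h | h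
        · exact mem_insert_iff.2 (Or.inl h)
        · exact mem_insert_iff.2 (Or.inr ⟨h, hyb⟩)
      have hcard : (vNeighbours2 (insert 0 (η ω)) 0).ncard ≤
          (η ω ∩ Metric.ball (0:Euc d) (4*T)).ncard + 1 := by
        calc (vNeighbours2 (insert 0 (η ω)) 0).ncard
            ≤ (insert 0 (η ω ∩ Metric.ball (0:Euc d) (4*T))).ncard :=
              Set.ncard_le_ncard hsub2 (hfin.insert 0)
        _ ≤ _ := Set.ncard_insert_le _ _
      simp only [Set.mem_setOf_eq] at hω ⊢
      omega
    · left
      push_neg at hF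
      obtain ⟨t, ht, hempty⟩ := hF
      have he : (η ω ∩ Metric.ball (T • t) (4/5*T)) = ∅ :=
        hempty
      exact Set.mem_biUnion ht (by simp [Set.mem_setOf_eq, he])
  -- part 2
  have hpart2 : P (⋃ t ∈ s, {ω | (η ω ∩ Metric.ball (T • t) (4/5*T)).ncard = 0})
      ≤ ENNReal.ofReal ((s.card:ℝ) * q^(n-1)) := by
    calc P (⋃ t ∈ s, {ω | (η ω ∩ Metric.ball (T • t) (4/5*T)).ncard = 0})
        ≤ ∑ t ∈ s, P {ω | (η ω ∩ Metric.ball (T • t) (4/5*T)).ncard = 0} :=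
          measure_biUnion_finset_le _ _
    _ ≤ ∑ _t ∈ s, ENNReal.ofReal (q^(n-1)) := by
        apply Finset.sum_le_sum
        intro t ht
        have h0 := (hpmf (Metric.ball (T • t) (4/5*T)) measurableSet_ball
          measure_ball_lt_top.ne).2 0
        rw [h0]
        simp only [pow_zero, mul_one, Nat.factorial_zero, Nat.cast_one, div_one]
        apply ENNReal.ofReal_le_ofReal
        rw [hm2 t]
        exact exp_le_q d hd n (by omega)
    _ = ENNReal.ofReal ((s.card:ℝ) * q^(n-1)) := by
        rw [Finset.sum_const, nsmul_eq_mul, ← ENNReal.ofReal_natCast s.card,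
          ← ENNReal.ofReal_mul (Nat.cast_nonneg _)]
  -- part 1
  have hcast : ((n-1:ℕ):ℝ) = (n:ℝ) - 1 := by
    push_cast [Nat.cast_sub (by omega : 1 ≤ n)]
    ring
  have hpart1 : P {ω | n - 1 ≤ (η ω ∩ Metric.ball (0:Euc d) (4*T)).ncard}
      ≤ ENNReal.ofReal (5 * (Real.exp (-(2/5*n)) * (2/5*(n:ℝ))^(n-1) / ((n-1).factorial : ℝ))) := by
    have hcover : {ω | n - 1 ≤ (η ω ∩ Metric.ball (0:Euc d) (4*T)).ncard} ⊆
        ⋃ j : ℕ, {ω | (η ω ∩ Metric.ball (0:Euc d) (4*T)).ncard = (n-1) + j} := by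
      intro ω hω
      simp only [Set.mem_setOf_eq] at hω
      exact Set.mem_iUnion.2 ⟨(η ω ∩ Metric.ball (0:Euc d) (4*T)).ncard - (n-1), by
        simp only [Set.mem_setOf_eq]; omega⟩
    calc P {ω | n - 1 ≤ (η ω ∩ Metric.ball (0:Euc d) (4*T)).ncard}
        ≤ P (⋃ j : ℕ, {ω | (η ω ∩ Metric.ball (0:Euc d) (4*T)).ncard = (n-1) + j}) :=
          measure_mono hcover
    _ ≤ ∑' j : ℕ, P {ω | (η ω ∩ Metric.ball (0:Euc d) (4*T)).ncard = (n-1) + j} :=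
          measure_iUnion_le _
    _ = ∑' j : ℕ, ENNReal.ofReal (Real.exp (-(2/5*(n:ℝ))) * (2/5*(n:ℝ))^((n-1)+j) /
          (((n-1)+j).factorial : ℝ)) := by
        congr 1
        funext j
        rw [(hpmf (Metric.ball (0:Euc d) (4*T)) measurableSet_ball
          measure_ball_lt_top.ne).2 ((n-1)+j), hm1]
    _ ≤ ENNReal.ofReal (5 * (Real.exp (-(2/5*(n:ℝ))) * (2/5*(n:ℝ))^(n-1) /
          ((n-1).factorial : ℝ))) := by
        have := tsum_tail_le (2/5*(n:ℝ)) (by positivity) (n-1) (by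
          rw [hcast]
          have : (2:ℝ) ≤ n := by exact_mod_cast hn
          linarith)
        convert this using 3 <;> ring
  -- combine
  have hqpow : (0:ℝ) ≤ q^(n-1) := by positivity
  have hPle : P {ω | n ≤ (vNeighbours2 (insert 0 (η ω)) 0).ncard} ≤
      ENNReal.ofReal ((s.card:ℝ) * q^(n-1)) +
      ENNReal.ofReal (5 * (Real.exp (-(2/5*(n:ℝ))) * (2/5*(n:ℝ))^(n-1) / ((n-1).factorial : ℝ))) := by
    calc P {ω | n ≤ (vNeighbours2 (insert 0 (η ω)) 0).ncard}
        ≤ P ((⋃ t ∈ s, {ω | (η ω ∩ Metric.ball (T • t) (4/5*T)).ncard = 0}) ∪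
          {ω | n - 1 ≤ (η ω ∩ Metric.ball (0:Euc d) (4*T)).ncard}) := measure_mono hsub
    _ ≤ _ + _ := measure_union_le _ _
    _ ≤ _ := add_le_add hpart2 hpart1
  rcases le_or_gt 5 n with h5 | h5
  · refine hPle.trans ?_
    rw [← ENNReal.ofReal_add (by positivity) (by positivity)]
    apply ENNReal.ofReal_le_ofReal
    have hp1 : Real.exp (-(2/5*(n:ℝ))) * (2/5*(n:ℝ))^(n-1) / ((n-1).factorial : ℝ)
        ≤ (15/16:ℝ)^(n-1) := part1_num n h5
    have hp2 : ((15:ℝ)/16)^(n-1) ≤ q^(n-1) := pow_le_pow_left₀ (by norm_num) hq15 _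
    nlinarith [Nat.cast_nonneg (α := ℝ) s.card]
  · have h1 : P {ω | n ≤ (vNeighbours2 (insert 0 (η ω)) 0).ncard} ≤ 1 := prob_le_one
    refine h1.trans ?_
    rw [show (1:ℝ≥0∞) = ENNReal.ofReal 1 by simp]
    apply ENNReal.ofReal_le_ofReal
    have hq3 : ((15:ℝ)/16)^3 ≤ q^(n-1) := by
      calc ((15:ℝ)/16)^3 ≤ q^3 := pow_le_pow_left₀ (by norm_num) hq15 3
      _ ≤ q^(n-1) := pow_le_pow_of_le_one hq0 (by linarith) (by omega)
    have h10 : (10:ℝ) * ((15/16:ℝ)^3) ≤ ((s.card:ℝ) + 10) * q^(n-1) :=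
      mul_le_mul (by linarith [Nat.cast_nonneg (α := ℝ) s.card]) hq3 (by positivity)
        (by linarith [Nat.cast_nonneg (α := ℝ) s.card])
    have h11 : (1:ℝ) ≤ 10 * ((15/16:ℝ)^3) := by norm_num
    linarith

/-- **Exponential tail and moments of the second-order Voronoi neighbourhood of the
origin in a Poisson process.** There is a constant `l` depending only on `d` such that
for every stationary Poisson process `η` with intensity `γ > 0` and all `n ≥ 2`,
`ℙ(|N₂(η⁰, 0)| ≥ n) ≤ l (1 - 16^{-d})^{n-1}`; consequently all moments of
`|N₂(η⁰, 0)|` are finite. -/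
theorem poisson_voronoi_second_order_neighbourhood (d : ℕ) (hd : 1 ≤ d) :
    ∃ l : ℝ, 0 < l ∧
      ∀ (Ω : Type) (_ : MeasurableSpace Ω) (P : Measure Ω), IsProbabilityMeasure P →
      ∀ γ : ℝ, 0 < γ →
      ∀ η : Ω → Set (Euc d), IsPoissonProcess P η γ →
        (∀ n : ℕ, 2 ≤ n →
          P {ω | n ≤ (vNeighbours2 (insert 0 (η ω)) 0).ncard}
            ≤ ENNReal.ofReal (l * (1 - (16 : ℝ) ^ (-(d : ℤ))) ^ (n - 1))) ∧
        (∀ m : ℕ, ∫⁻ ω, ((vNeighbours2 (insert 0 (η ω)) 0).ncard : ℝ≥0∞) ^ m ∂P ≠ ∞) := by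
  obtain ⟨s, hs⟩ := exists_net d
  refine ⟨(s.card:ℝ) + 10, by positivity, ?_⟩
  intro Ω mΩ P hP γ hγ η hη
  haveI := hP
  have tail : ∀ n : ℕ, 2 ≤ n → P {ω | n ≤ (vNeighbours2 (insert 0 (η ω)) 0).ncard}
      ≤ ENNReal.ofReal (((s.card:ℝ) + 10) * (1 - (16:ℝ)^(-(d:ℤ)))^(n-1)) :=
    fun n hn => tail_bound d hd s hs P γ hγ η hη n hn
  obtain ⟨hs0, hs16, hq15, hq1⟩ := q_facts d hd
  exact ⟨tail, fun m => moments_ne_top P (fun ω => (vNeighbours2 (insert 0 (η ω)) 0).ncard)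
    ((s.card:ℝ) + 10) (1 - (16:ℝ)^(-(d:ℤ))) (by positivity) (by linarith) (by linarith) tail m⟩
end
end
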